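/- Let V be a finite-dimensional vector space over a finite field F and let A_1,…,A_n, C be arbitrary subspaces of V. Then there exist subspaces A'_k ⊆ A_k (for k = 1,…,n) and C̄ ⊆ C such that: (1) the sum A'_1 + ⋯ + A'_n is direct; (2) C̄ ⊆ A'_1 + ⋯ + A'_n and C̄ ∩ (Σ_{i≠k} A'_i) = 0 for every k; (3) dim A_k − dim A'_k = I(A_1+⋯+A_{k−1} ; A_k) for every k; and (4) dim C − dim C̄ ≤ H(C | A_1,…,A_n) + Σ_{i=1}^{n} I(Σ_{j≠i} A_j ; C). -/

import Mathlib

open Finset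
open Module

set_option linter.unusedSectionVars false

section Helpers

variable {F V : Type*} [Field F] [AddCommGroup V] [Module F V] [FiniteDimensional F V]


/-- complement of `p` inside `q` -/
lemma exists_compl_le (p q : Submodule F V) (hpq : p ≤ q) :
    ∃ r : Submodule F V, r ≤ q ∧ r ⊓ p = ⊥ ∧ r ⊔ p = q := by
  obtain ⟨r', hr'⟩ := (p.comap q.subtype).exists_isCompl
  refine ⟨r'.map q.subtype, Submodule.map_subtype_le q r', ?_, ?_⟩
  · rw [show p = Submodule.map q.subtype (p.comap q.subtype) by
      rw [Submodule.map_comap_subtype, inf_eq_right.mpr hpq],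
      ← Submodule.map_inf _ q.injective_subtype, hr'.symm.inf_eq_bot, Submodule.map_bot]
  · rw [show p = Submodule.map q.subtype (p.comap q.subtype) by
      rw [Submodule.map_comap_subtype, inf_eq_right.mpr hpq],
      ← Submodule.map_sup, hr'.symm.sup_eq_top, Submodule.map_subtype_top]

lemma finrank_sum_le {s : Finset ℕ} (f : ℕ → Submodule F V) :
    finrank F (∑ i ∈ s, f i : Submodule F V) ≤ ∑ i ∈ s, finrank F (f i) := by
  classical
  induction s using Finset.cons_induction with
  | empty => simp; exact Submodule.finrank_eq_zero.mpr rfl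
  | cons a s ha ih =>
    rw [Finset.sum_cons, Finset.sum_cons]
    exact le_trans (Submodule.finrank_add_le_finrank_add_finrank _ _) (by omega)

lemma sum_le_of_le {s : Finset ℕ} (f : ℕ → Submodule F V) (X : Submodule F V)
    (h : ∀ i ∈ s, f i ≤ X) : (∑ i ∈ s, f i) ≤ X := by
  classical
  induction s using Finset.cons_induction with
  | empty => simp
  | cons a s ha ih =>
    rw [Finset.sum_cons]
    exact sup_le (h a (Finset.mem_cons_self a s)) (ih fun i hi => h i (Finset.mem_cons.2 (Or.inr hi)))

lemma le_sum_of_mem {s : Finset ℕ} (f : ℕ → Submodule F V) {k : ℕ} (hk : k ∈ s) :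
    f k ≤ ∑ i ∈ s, f i := by
  classical
  rw [← Finset.sum_erase_add _ _ hk]
  exact le_sup_right

end Helpers

/-- Construction of a tuple satisfying the condition of complementary vector
spaces from arbitrary subspaces `A_1,…,A_n, C` (inequalities (1)–(4) of the
paper): there are subspaces `A'_k ⊆ A_k` and `C̄ ⊆ C` such that the sum of the
`A'_k` is direct, `C̄` lies in it and meets each `Σ_{i≠k} A'_i` trivially,
`dim A_k − dim A'_k = I(A_1+⋯+A_{k−1} ; A_k)`, and
`dim C − dim C̄ ≤ H(C | A_1,…,A_n) + Σ_{i=1}^{n} I(Σ_{j≠i} A_j ; C)`. -/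
theorem exists_complementary_tuple (F V : Type*) [Field F] [Fintype F]
    [AddCommGroup V] [Module F V] [FiniteDimensional F V]
    (n : ℕ) (A : ℕ → Submodule F V) (C : Submodule F V) :
    ∃ (A' : ℕ → Submodule F V) (Cb : Submodule F V),
      (∀ k ∈ Icc 1 n, A' k ≤ A k) ∧ Cb ≤ C ∧
      (∀ k ∈ Icc 1 n, A' k ⊓ (∑ i ∈ (Icc 1 n).erase k, A' i) = ⊥) ∧
      Cb ≤ (∑ i ∈ Icc 1 n, A' i) ∧
      (∀ k ∈ Icc 1 n, Cb ⊓ (∑ i ∈ (Icc 1 n).erase k, A' i) = ⊥) ∧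
      (∀ k ∈ Icc 1 n,
        (Module.finrank F (A k) : ℤ) - Module.finrank F (A' k)
          = Module.finrank F (((∑ j ∈ Icc 1 (k - 1), A j) ⊓ A k : Submodule F V))) ∧
      ((Module.finrank F C : ℤ) - Module.finrank F Cb
        ≤ ((Module.finrank F ((C + ∑ i ∈ Icc 1 n, A i : Submodule F V)) : ℤ)
              - Module.finrank F ((∑ i ∈ Icc 1 n, A i : Submodule F V)))
          + ∑ i ∈ Icc 1 n,
              (Module.finrank F (((∑ j ∈ (Icc 1 n).erase i, A j) ⊓ C : Submodule F V)) : ℤ)) := by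
  classical
  -- the partial sums of the `A`s
  set S : ℕ → Submodule F V := fun m => ∑ i ∈ Icc 1 m, A i with hS
  -- choose `A' k` a complement of `S (k-1) ⊓ A k` in `A k`
  have hex : ∀ k : ℕ, ∃ r : Submodule F V,
      r ≤ A k ∧ r ⊓ (S (k - 1) ⊓ A k) = ⊥ ∧ r ⊔ (S (k - 1) ⊓ A k) = A k :=
    fun k => exists_compl_le _ _ inf_le_right
  choose A' hA'le hA'inf hA'sup using hex
  -- basic facts
  have hrk : ∀ k : ℕ, finrank F (A k) = finrank F (A' k)
      + finrank F ((S (k - 1) ⊓ A k : Submodule F V)) := by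
    intro k
    have := Submodule.finrank_sup_add_finrank_inf_eq (A' k) (S (k - 1) ⊓ A k)
    rw [hA'inf k, hA'sup k] at this
    simpa using this
  -- sums of `A'` equal sums of `A`
  have hsum : ∀ m : ℕ, (∑ i ∈ Icc 1 m, A' i) = S m := by
    intro m
    induction m with
    | zero => simp [hS]
    | succ m ih =>
      rw [Finset.sum_Icc_succ_top (by omega : (1:ℕ) ≤ m + 1), ih]
      have hstep : S (m + 1) = S m + A (m + 1) := by
        simp only [hS]
        rw [Finset.sum_Icc_succ_top (by omega : (1:ℕ) ≤ m + 1)]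
      rw [hstep]
      have h := hA'sup (m + 1)
      rw [Nat.add_sub_cancel] at h
      rw [Submodule.add_eq_sup, Submodule.add_eq_sup, ← h, ← sup_assoc]
      exact (sup_eq_left.mpr (le_trans inf_le_left le_sup_left)).symm
  have hA'le' : ∀ m : ℕ, (∑ i ∈ Icc 1 m, A' i) ≤ S m := fun m => (hsum m).le
  -- disjointness of `A' (m+1)` from the previous partial sum
  have hdisj : ∀ m : ℕ, (S m ⊓ A' (m + 1)) = ⊥ := by
    intro m
    have h1 : S m ⊓ A' (m + 1) ≤ A' (m + 1) ⊓ (S m ⊓ A (m + 1)) := by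
      refine le_inf inf_le_right (le_inf inf_le_left ?_)
      exact le_trans inf_le_right (hA'le (m + 1))
    have := hA'inf (m + 1)
    simp only [show (m + 1) - 1 = m from rfl] at this
    rw [← le_bot_iff]
    exact le_trans h1 this.le
  -- the dimension of partial sums of `A'` is the sum of dimensions
  have hdim : ∀ m : ℕ, finrank F ((∑ i ∈ Icc 1 m, A' i : Submodule F V))
      = ∑ i ∈ Icc 1 m, finrank F (A' i) := by
    intro m
    induction m with
    | zero => simp
    | succ m ih =>
      rw [Finset.sum_Icc_succ_top (by omega : (1:ℕ) ≤ m + 1),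
        Finset.sum_Icc_succ_top (by omega : (1:ℕ) ≤ m + 1), ← ih]
      have hb : ((∑ i ∈ Icc 1 m, A' i) ⊓ A' (m + 1) : Submodule F V) = ⊥ := by
        rw [← le_bot_iff, ← hdisj m]
        exact inf_le_inf_right _ (hA'le' m)
      have := Submodule.finrank_sup_add_finrank_inf_eq (∑ i ∈ Icc 1 m, A' i) (A' (m + 1))
      rw [hb] at this
      simp only [Submodule.add_eq_sup]
      simp at this
      omega
  -- directness of the sum
  have hdirect : ∀ k ∈ Icc 1 n, A' k ⊓ (∑ i ∈ (Icc 1 n).erase k, A' i) = ⊥ := by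
    intro k hk
    have hsup : A' k ⊔ (∑ i ∈ (Icc 1 n).erase k, A' i) = ∑ i ∈ Icc 1 n, A' i := by
      rw [← Submodule.add_eq_sup, ← Finset.add_sum_erase _ _ hk]
    have h1 := Submodule.finrank_sup_add_finrank_inf_eq (A' k) (∑ i ∈ (Icc 1 n).erase k, A' i)
    rw [hsup, hdim n] at h1
    have h2 : finrank F ((∑ i ∈ (Icc 1 n).erase k, A' i : Submodule F V))
        ≤ ∑ i ∈ (Icc 1 n).erase k, finrank F (A' i) := finrank_sum_le _
    have h3 : ∑ i ∈ Icc 1 n, finrank F (A' i)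
        = finrank F (A' k) + ∑ i ∈ (Icc 1 n).erase k, finrank F (A' i) :=
      (Finset.add_sum_erase _ _ hk).symm
    have h0 : finrank F ((A' k ⊓ ∑ i ∈ (Icc 1 n).erase k, A' i : Submodule F V)) = 0 := by omega
    exact Submodule.finrank_eq_zero.mp h0
  -- the subspace `Cb`
  set C₀ : Submodule F V := C ⊓ S n with hC₀
  set W : Submodule F V := ∑ k ∈ Icc 1 n, (C₀ ⊓ ∑ j ∈ (Icc 1 n).erase k, A j) with hW
  have hWle : W ≤ C₀ := sum_le_of_le _ _ (fun i _ => inf_le_left)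
  obtain ⟨Cb, hCb_le, hCb_inf, hCb_sup⟩ := exists_compl_le W C₀ hWle
  refine ⟨A', Cb, fun k _ => hA'le k, le_trans hCb_le inf_le_left,
    hdirect, ?_, ?_, ?_, ?_⟩
  · rw [hsum n]; exact le_trans hCb_le inf_le_right
  · -- `Cb` meets each partial complement sum trivially
    intro k hk
    have h1 : (∑ i ∈ (Icc 1 n).erase k, A' i) ≤ ∑ j ∈ (Icc 1 n).erase k, A j :=
      Finset.sum_le_sum (fun i _ => hA'le i)
    have h2 : Cb ⊓ (∑ i ∈ (Icc 1 n).erase k, A' i) ≤ Cb ⊓ W := by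
      refine le_inf inf_le_left ?_
      have : Cb ⊓ (∑ i ∈ (Icc 1 n).erase k, A' i) ≤ C₀ ⊓ ∑ j ∈ (Icc 1 n).erase k, A j :=
        le_inf (le_trans inf_le_left hCb_le) (le_trans inf_le_right h1)
      refine le_trans this ?_
      rw [hW]
      exact le_sum_of_mem (fun k => C₀ ⊓ ∑ j ∈ (Icc 1 n).erase k, A j) hk
    rw [← le_bot_iff, ← hCb_inf]
    exact h2
  · -- dimension identity (3)
    intro k hk
    have hgoal : ((∑ j ∈ Icc 1 (k - 1), A j) ⊓ A k : Submodule F V) = S (k - 1) ⊓ A k := rfl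
    rw [hgoal]
    have := hrk k
    omega
  · -- dimension inequality (4)
    have e1 : finrank F Cb + finrank F W = finrank F C₀ := by
      have := Submodule.finrank_sup_add_finrank_inf_eq Cb W
      rw [hCb_inf, hCb_sup] at this
      simpa using this.symm
    have e2 : finrank F ((C ⊔ S n : Submodule F V)) + finrank F C₀
        = finrank F C + finrank F (S n) := by
      rw [hC₀]; exact Submodule.finrank_sup_add_finrank_inf_eq C (S n)
    have e3 : finrank F W ≤ ∑ k ∈ Icc 1 n,
        finrank F (((∑ j ∈ (Icc 1 n).erase k, A j) ⊓ C : Submodule F V)) := by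
      refine le_trans (finrank_sum_le _) (Finset.sum_le_sum fun i _ => ?_)
      exact Submodule.finrank_mono (le_inf inf_le_right (le_trans inf_le_left inf_le_left))
    have hSn : (∑ i ∈ Icc 1 n, A i : Submodule F V) = S n := rfl
    rw [Submodule.add_eq_sup, hSn]
    have e3' : (∑ k ∈ Icc 1 n,
        (finrank F (((∑ j ∈ (Icc 1 n).erase k, A j) ⊓ C : Submodule F V)) : ℤ))
        = ((∑ k ∈ Icc 1 n,
          finrank F (((∑ j ∈ (Icc 1 n).erase k, A j) ⊓ C : Submodule F V)) : ℕ) : ℤ) := by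
      push_cast; ring
    rw [e3']
    have := Nat.cast_le (α := ℤ) |>.mpr e3
    omega
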